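/- For the Round-Robin protocol with ℓ nodes, the function W(i,e) = √(Σ_{k=i}^{∞} |φ(k,i,e)|²), where φ(k,i,e) is the solution at time k of the RR error recursion starting from e at time i, satisfies |e| ≤ W(i,e) ≤ √ℓ·|e| and W(i+1, h(i,e)) ≤ √((ℓ-1)/ℓ)·W(i,e) for all i and e. -/

import Mathlib

open Set

/-- Round-Robin update: at time `i` the component `i % ℓ` of the error is
reset to zero. -/
noncomputable def rrH (ℓ : ℕ) (i : ℕ) (e : EuclideanSpace ℝ (Fin ℓ)) :
    EuclideanSpace ℝ (Fin ℓ) :=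
  WithLp.toLp 2 (fun j : Fin ℓ => if (j : ℕ) = i % ℓ then 0 else e j)

/-- `rrSol ℓ i e n` is the solution of the Round-Robin error recursion after
`n` steps, starting from `e` at time `i` (i.e. `φ(i+n, i, e)`). -/
noncomputable def rrSol (ℓ : ℕ) (i : ℕ) (e : EuclideanSpace ℝ (Fin ℓ)) :
    ℕ → EuclideanSpace ℝ (Fin ℓ)
  | 0 => e
  | n + 1 => rrH ℓ (i + n) (rrSol ℓ i e n)

/-- The Round-Robin Lyapunov function
`W(i,e) = √(Σ_{k=i}^{∞} |φ(k,i,e)|²)`. -/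
noncomputable def rrW (ℓ : ℕ) (i : ℕ) (e : EuclideanSpace ℝ (Fin ℓ)) : ℝ :=
  Real.sqrt (∑' n : ℕ, ‖rrSol ℓ i e n‖ ^ 2)

/-- Lyapunov properties of the Round-Robin protocol:
`|e| ≤ W(i,e) ≤ √ℓ·|e|` and `W(i+1, h(i,e)) ≤ √((ℓ-1)/ℓ)·W(i,e)`. -/
lemma rrH_norm_le (ℓ j : ℕ) (e : EuclideanSpace ℝ (Fin ℓ)) :
    ‖rrH ℓ j e‖ ≤ ‖e‖ := by
  rw [EuclideanSpace.norm_eq, EuclideanSpace.norm_eq]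
  apply Real.sqrt_le_sqrt
  apply Finset.sum_le_sum
  intro k _
  simp only [rrH, PiLp.toLp_apply]
  split
  · simp; positivity
  · exact le_rfl

lemma rrSol_norm_le (ℓ i : ℕ) (e : EuclideanSpace ℝ (Fin ℓ)) (n : ℕ) :
    ‖rrSol ℓ i e n‖ ≤ ‖e‖ := by
  induction n with
  | zero => simp [rrSol]
  | succ n ih => exact (rrH_norm_le ℓ (i + n) (rrSol ℓ i e n)).trans ih

lemma rrSol_comp_zero (ℓ i : ℕ) (e : EuclideanSpace ℝ (Fin ℓ)) :
    ∀ n (j : Fin ℓ), (∃ m, m < n ∧ (i + m) % ℓ = (j : ℕ)) → rrSol ℓ i e n j = 0 := by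
  intro n
  induction n with
  | zero => rintro j ⟨m, hm, _⟩; omega
  | succ n ih =>
    rintro j ⟨m, hm, hmod⟩
    show rrH ℓ (i + n) (rrSol ℓ i e n) j = 0
    simp only [rrH, PiLp.toLp_apply]
    split
    · rfl
    · rename_i hne
      refine ih j ⟨m, ?_, hmod⟩
      rcases Nat.lt_succ_iff_lt_or_eq.mp hm with h | h
      · exact h
      · exact absurd (h ▸ hmod).symm hne

lemma rrSol_eq_zero (ℓ i : ℕ) (hℓ : 1 ≤ ℓ) (e : EuclideanSpace ℝ (Fin ℓ))
    (n : ℕ) (hn : ℓ ≤ n) : rrSol ℓ i e n = 0 := by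
  ext j
  apply rrSol_comp_zero
  have hℓ0 : 0 < ℓ := hℓ
  refine ⟨((j : ℕ) + (ℓ - i % ℓ)) % ℓ, lt_of_lt_of_le (Nat.mod_lt _ hℓ0) hn, ?_⟩
  have h1 : (i + ((j : ℕ) + (ℓ - i % ℓ)) % ℓ) % ℓ
      = (i % ℓ + ((j : ℕ) + (ℓ - i % ℓ))) % ℓ := by
    conv_lhs => rw [Nat.add_mod, Nat.mod_mod_of_dvd _ dvd_rfl]
    conv_rhs => rw [Nat.add_mod, Nat.mod_mod_of_dvd _ dvd_rfl]
  rw [h1]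
  have h2 : i % ℓ + ((j : ℕ) + (ℓ - i % ℓ)) = (j : ℕ) + ℓ := by
    have := Nat.mod_lt i hℓ0
    omega
  rw [h2, Nat.add_mod_right, Nat.mod_eq_of_lt j.isLt]

lemma rrSol_shift (ℓ i : ℕ) (e : EuclideanSpace ℝ (Fin ℓ)) (n : ℕ) :
    rrSol ℓ (i + 1) (rrH ℓ i e) n = rrSol ℓ i e (n + 1) := by
  induction n with
  | zero => show rrH ℓ i e = rrH ℓ (i + 0) (rrSol ℓ i e 0); rfl
  | succ n ih =>
    show rrH ℓ (i + 1 + n) (rrSol ℓ (i + 1) (rrH ℓ i e) n)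
        = rrH ℓ (i + (n + 1)) (rrSol ℓ i e (n + 1))
    have h : i + 1 + n = i + (n + 1) := by omega
    rw [ih, h]

theorem roundRobin_lyapunov
    (ℓ : ℕ) (hℓ : 1 ≤ ℓ) (i : ℕ) (e : EuclideanSpace ℝ (Fin ℓ)) :
    ‖e‖ ≤ rrW ℓ i e ∧
    rrW ℓ i e ≤ Real.sqrt ℓ * ‖e‖ ∧
    rrW ℓ (i + 1) (rrH ℓ i e) ≤ Real.sqrt (((ℓ : ℝ) - 1) / ℓ) * rrW ℓ i e := by
  have hℓ0 : (0:ℝ) < ℓ := by exact_mod_cast hℓ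
  set a : ℕ → ℝ := fun n => ‖rrSol ℓ i e n‖ ^ 2 with ha
  have ha0 : a 0 = ‖e‖ ^ 2 := by simp [ha, rrSol]
  have hzero : ∀ n, ℓ ≤ n → a n = 0 := by
    intro n hn
    simp [ha, rrSol_eq_zero ℓ i hℓ e n hn]
  have hS : (∑' n : ℕ, a n) = ∑ n ∈ Finset.range ℓ, a n :=
    tsum_eq_sum (fun n hn => hzero n (by simpa using hn))
  set S : ℝ := ∑ n ∈ Finset.range ℓ, a n with hSdef
  have hanneg : ∀ n, 0 ≤ a n := fun n => sq_nonneg _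
  have hSnneg : 0 ≤ S := Finset.sum_nonneg fun n _ => hanneg n
  have hlow : ‖e‖ ^ 2 ≤ S := by
    rw [← ha0]
    exact Finset.single_le_sum (fun n _ => hanneg n)
      (Finset.mem_range.mpr hℓ)
  have hup : S ≤ (ℓ : ℝ) * ‖e‖ ^ 2 := by
    calc S ≤ ∑ _n ∈ Finset.range ℓ, ‖e‖ ^ 2 := by
            apply Finset.sum_le_sum
            intro n _
            exact pow_le_pow_left₀ (norm_nonneg _) (rrSol_norm_le ℓ i e n) 2
      _ = (ℓ : ℝ) * ‖e‖ ^ 2 := by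
            rw [Finset.sum_const, Finset.card_range, nsmul_eq_mul]
  have hW : rrW ℓ i e = Real.sqrt S := by rw [rrW, hS]
  refine ⟨?_, ?_, ?_⟩
  · rw [hW]
    calc ‖e‖ = Real.sqrt (‖e‖ ^ 2) := by rw [Real.sqrt_sq (norm_nonneg _)]
      _ ≤ Real.sqrt S := Real.sqrt_le_sqrt hlow
  · rw [hW]
    calc Real.sqrt S ≤ Real.sqrt ((ℓ : ℝ) * ‖e‖ ^ 2) := Real.sqrt_le_sqrt hup
      _ = Real.sqrt ℓ * ‖e‖ := by
          rw [Real.sqrt_mul (le_of_lt hℓ0), Real.sqrt_sq (norm_nonneg _)]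
  · -- contraction
    have hshift : (∑' n : ℕ, ‖rrSol ℓ (i+1) (rrH ℓ i e) n‖ ^ 2)
        = ∑ n ∈ Finset.range ℓ, a (n + 1) := by
      have h1 : ∀ n : ℕ, ‖rrSol ℓ (i+1) (rrH ℓ i e) n‖ ^ 2 = a (n + 1) := by
        intro n; rw [ha]; simp [rrSol_shift]
      rw [tsum_congr h1]
      exact tsum_eq_sum (fun n hn => hzero (n+1) (by simp at hn; omega))
    have hS' : (∑ n ∈ Finset.range ℓ, a (n + 1)) = S - a 0 := by
      have := Finset.sum_range_succ' a ℓ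
      have hl : a ℓ = 0 := hzero ℓ le_rfl
      have h2 := Finset.sum_range_succ a ℓ
      rw [h2, hl, add_zero] at this
      linarith [this]
    have hkey : S - a 0 ≤ ((ℓ : ℝ) - 1) / ℓ * S := by
      rw [div_mul_eq_mul_div, le_div_iff₀ hℓ0, ha0]
      nlinarith [hup]
    rw [hW, rrW, hshift, hS']
    calc Real.sqrt (S - a 0) ≤ Real.sqrt (((ℓ : ℝ) - 1) / ℓ * S) :=
          Real.sqrt_le_sqrt hkey
      _ = Real.sqrt (((ℓ : ℝ) - 1) / ℓ) * Real.sqrt S := by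
          have h1ℓ : (1:ℝ) ≤ ℓ := by exact_mod_cast hℓ
          rw [Real.sqrt_mul (div_nonneg (by linarith) hℓ0.le)]
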